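/- Let D be a τ-atomic integral domain with τ symmetric, refinable, and associate preserving. If every x ∈ D^# has only finitely many τ-irreducible τ-divisors up to associates (D is a τ-atomic τ-idf domain), then D is a τ-finite factorization domain. -/

import Mathlib

/-- `a` is a nonzero nonunit, i.e. an element of `D^#`. -/
def NzNonunit {D : Type*} [CommRing D] (a : D) : Prop := a ≠ 0 ∧ ¬ IsUnit a

/-- `l` is the list of factors of a `τ`-factorization of `a`:
`a = λ * l.prod` for a unit `λ`, the factors are nonzero nonunits and pairwise `τ`-related. -/
def TauFact {D : Type*} [CommRing D] (τ : D → D → Prop) (l : List D) (a : D) : Prop :=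
  l ≠ [] ∧ (∀ b ∈ l, NzNonunit b) ∧ l.Pairwise τ ∧ ∃ u : Dˣ, a = (u : D) * l.prod

/-- `b` τ-divides `a`: `b` occurs as a factor in some τ-factorization of `a`. -/
def TauDvd {D : Type*} [CommRing D] (τ : D → D → Prop) (b a : D) : Prop :=
  ∃ l, TauFact τ l a ∧ b ∈ l

/-- `a` is τ-irreducible (a τ-atom): all its τ-factorizations are trivial. -/
def TauIrred {D : Type*} [CommRing D] (τ : D → D → Prop) (a : D) : Prop :=
  NzNonunit a ∧ ∀ l, TauFact τ l a → l.length = 1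

/-- `l` is a τ-atomic factorization of `a`. -/
def TauAtomicFact {D : Type*} [CommRing D] (τ : D → D → Prop) (l : List D) (a : D) : Prop :=
  TauFact τ l a ∧ ∀ b ∈ l, TauIrred τ b

/-- `D` is τ-atomic: every nonzero nonunit has a τ-atomic factorization. -/
def TauAtomic {D : Type*} [CommRing D] (τ : D → D → Prop) : Prop :=
  ∀ a : D, NzNonunit a → ∃ l, TauAtomicFact τ l a

def TauSymm {D : Type*} [CommRing D] (τ : D → D → Prop) : Prop :=
  ∀ a b, τ a b → τ b a

/-- τ is associate preserving. -/
def TauAssocPres {D : Type*} [CommRing D] (τ : D → D → Prop) : Prop :=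
  ∀ a b b' : D, τ a b → Associated b b' → τ a b'

/-- τ is refinable: replacing each factor of a τ-factorization by a
τ-factorization of it again yields a τ-factorization. -/
def TauRefinable {D : Type*} [CommRing D] (τ : D → D → Prop) : Prop :=
  ∀ (a : D) (l : List D) (F : List (List D)),
    TauFact τ l a → List.Forall₂ (fun b m => TauFact τ m b) l F →
    TauFact τ F.flatten a

/-- `a` is a vertex of the τ-irreducible divisor graph `G_τ(x)`. -/
def GVert {D : Type*} [CommRing D] (τ : D → D → Prop) (x a : D) : Prop :=
  TauIrred τ a ∧ TauDvd τ a x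

/-- `a` and `b` are adjacent (distinct, i.e. non-associated, vertices joined by an edge)
in `G_τ(x)`: some τ-factorization of `x` contains associates of both. -/
def GAdj {D : Type*} [CommRing D] (τ : D → D → Prop) (x a b : D) : Prop :=
  GVert τ x a ∧ GVert τ x b ∧ ¬ Associated a b ∧
  ∃ l, TauFact τ l x ∧ (∃ a' ∈ l, Associated a a') ∧ (∃ b' ∈ l, Associated b b')

/-- `G_τ(x)` is connected (vertices are taken up to associates). -/
def GConnected {D : Type*} [CommRing D] (τ : D → D → Prop) (x : D) : Prop :=
  ∀ a b, GVert τ x a → GVert τ x b →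
    Relation.ReflTransGen (fun u v => GAdj τ x u v ∨ Associated u v) a b

/-- The reduced graph `G̅_τ(x)` (loops deleted) is connected; loops do not affect
connectivity, so this is connectivity with respect to the same adjacency relation. -/
def GBarConnected {D : Type*} [CommRing D] (τ : D → D → Prop) (x : D) : Prop :=
  ∀ a b, GVert τ x a → GVert τ x b →
    Relation.ReflTransGen (fun u v => GAdj τ x u v ∨ Associated u v) a b

/-- `G_τ(x)` is a pseudoclique: any two non-associated vertices are adjacent.
(Equivalently, the reduced graph `G̅_τ(x)` is a clique / complete graph.) -/
def GPseudoclique {D : Type*} [CommRing D] (τ : D → D → Prop) (x : D) : Prop :=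
  ∀ a b, GVert τ x a → GVert τ x b → ¬ Associated a b → GAdj τ x a b

/-- `Diam(G_τ(x)) ≤ 1`: any two vertices are equal (associated) or adjacent. -/
def GDiamLeOne {D : Type*} [CommRing D] (τ : D → D → Prop) (x : D) : Prop :=
  ∀ a b, GVert τ x a → GVert τ x b → Associated a b ∨ GAdj τ x a b

/-- `G_τ(x)` has finitely many vertices (up to associates). -/
def GVertFinite {D : Type*} [CommRing D] (τ : D → D → Prop) (x : D) : Prop :=
  ∃ s : Finset D, ∀ a, GVert τ x a → ∃ c ∈ s, Associated a c

/-- The vertex `a` of `G_τ(x)` has finite degree: finitely many adjacent vertices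
up to associates (loops not counted). -/
def GDegFinite {D : Type*} [CommRing D] (τ : D → D → Prop) (x a : D) : Prop :=
  ∃ s : Finset D, ∀ b, GAdj τ x a b → ∃ c ∈ s, Associated b c

/-- The vertex `a` of `G_τ(x)` carries finitely many loops: there is a uniform bound on
the number of occurrences of associates of `a` in τ-atomic factorizations of `x`. -/
def GLoopsFinite {D : Type*} [CommRing D] (τ : D → D → Prop) (x a : D) : Prop :=
  ∃ N : ℕ, ∀ l m : List D, TauAtomicFact τ l x → m.Sublist l →
    (∀ b ∈ m, Associated a b) → m.length ≤ N

/-- `D` satisfies τ-ACCP. -/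
def TauACCP {D : Type*} [CommRing D] (τ : D → D → Prop) : Prop :=
  ∀ a : ℕ → D, (∀ i, TauDvd τ (a (i + 1)) (a i)) →
    ∃ N, ∀ i, N ≤ i → Associated (a i) (a N)

/-- `D` is a τ-UFD. -/
def TauUFD {D : Type*} [CommRing D] (τ : D → D → Prop) : Prop :=
  TauAtomic τ ∧ ∀ (x : D) (l₁ l₂ : List D), TauAtomicFact τ l₁ x → TauAtomicFact τ l₂ x →
    Multiset.Rel Associated (l₁ : Multiset D) (l₂ : Multiset D)

/-- `D` is a τ-FFD: each nonzero nonunit has only finitely many τ-factorizations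
up to rearrangement and associates. -/
def TauFFD {D : Type*} [CommRing D] (τ : D → D → Prop) : Prop :=
  ∀ x : D, NzNonunit x → ∃ S : Finset (Multiset D),
    ∀ l : List D, TauFact τ l x → ∃ m ∈ S, Multiset.Rel Associated (l : Multiset D) m

/-- `D` is a τ-WFFD: each nonzero nonunit has finitely many τ-divisors up to associates. -/
def TauWFFD {D : Type*} [CommRing D] (τ : D → D → Prop) : Prop :=
  ∀ x : D, NzNonunit x → ∃ s : Finset D,
    ∀ b, TauDvd τ b x → ∃ c ∈ s, Associated b c

/-- `D` is a τ-idf domain: each nonzero nonunit has finitely many τ-irreducible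
τ-divisors up to associates. -/
def TauIdf {D : Type*} [CommRing D] (τ : D → D → Prop) : Prop :=
  ∀ x : D, NzNonunit x → ∃ s : Finset D,
    ∀ b, TauIrred τ b → TauDvd τ b x → ∃ c ∈ s, Associated b c


section Aux
variable {D : Type*} [CommRing D] [IsDomain D] {τ : D → D → Prop}

lemma nzNonunit_of_assoc {a b : D} (h : Associated a b) (ha : NzNonunit a) : NzNonunit b := by
  obtain ⟨u, rfl⟩ := h
  exact ⟨mul_ne_zero ha.1 u.ne_zero, fun hu => ha.2 ((Units.isUnit_mul_units a u).mp hu)⟩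

lemma assoc_prod_of_forall₂ : ∀ {l₁ l₂ : List D}, List.Forall₂ Associated l₁ l₂ →
    Associated l₁.prod l₂.prod
  | _, _, List.Forall₂.nil => by simp
  | _, _, List.Forall₂.cons h hs => by
      simpa using (h.mul_mul (assoc_prod_of_forall₂ hs))

lemma rel_coe_of_forall₂ {r : D → D → Prop} : ∀ {l₁ l₂ : List D}, List.Forall₂ r l₁ l₂ →
    Multiset.Rel r (l₁ : Multiset D) (l₂ : Multiset D)
  | _, _, List.Forall₂.nil => Multiset.Rel.zero
  | _, _, List.Forall₂.cons h hs => by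
      simpa using Multiset.Rel.cons h (rel_coe_of_forall₂ hs)

lemma length_le_flatten_length : ∀ (F : List (List D)), (∀ m ∈ F, m ≠ []) →
    F.length ≤ F.flatten.length
  | [], _ => le_rfl
  | m :: F, h => by
      have hm : 1 ≤ m.length := by
        have := h m (List.mem_cons_self (a := m) (l := F))
        exact List.length_pos_iff.mpr this
      have := length_le_flatten_length F (fun m hm => h m (List.mem_cons_of_mem _ hm))
      simp only [List.flatten_cons, List.length_cons, List.length_append]
      omega

lemma block_length_le_flatten_length {m : List D} : ∀ {F : List (List D)}, m ∈ F →
    m.length ≤ F.flatten.length := by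
  intro F hm
  induction F with
  | nil => simp at hm
  | cons m' F ih =>
      simp only [List.flatten_cons, List.length_append]
      rcases List.mem_cons.mp hm with rfl | hm
      · omega
      · have := ih hm; omega

lemma exists_unit_eq_of_assoc {x y : D} (h : Associated y x) : ∃ u : Dˣ, x = (u : D) * y := by
  obtain ⟨u, rfl⟩ := h
  exact ⟨u, mul_comm y u⟩

end Aux


section Main
variable {D : Type*} [CommRing D] [IsDomain D] {τ : D → D → Prop}

lemma assoc_of_unit_mul {x y : D} (u : Dˣ) (h : x = (u : D) * y) : Associated x y :=
  ⟨u⁻¹, by rw [h, mul_comm (u : D) y]; exact Units.mul_inv_cancel_right _ _⟩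

end Main

theorem stmt11 {D : Type*} [CommRing D] [IsDomain D] (τ : D → D → Prop)
    (hsym : TauSymm τ) (href : TauRefinable τ) (hap : TauAssocPres τ)
    (hatomic : TauAtomic τ) (hidf : TauIdf τ) :
    TauFFD τ := by
  classical
  intro x hx
  obtain ⟨s₀, hs₀⟩ := hidf x hx
  set s : Finset D := s₀.filter (fun p => NzNonunit p) with hs_def
  have hs : ∀ b, TauIrred τ b → TauDvd τ b x → ∃ p, p ∈ s ∧ Associated b p := by
    intro b hb hbd
    obtain ⟨c, hc, hbc⟩ := hs₀ b hb hbd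
    exact ⟨c, Finset.mem_filter.mpr ⟨hc, nzNonunit_of_assoc hbc hb.1⟩, hbc⟩
  have hsnz : ∀ p ∈ s, NzNonunit p := fun p hp => (Finset.mem_filter.mp hp).2
  set repf : D → D := fun a => if h : ∃ p, p ∈ s ∧ Associated a p then h.choose else a
    with hrepf_def
  have hrep : ∀ a : D, TauIrred τ a → TauDvd τ a x → repf a ∈ s ∧ Associated a (repf a) := by
    intro a h1 h2
    have h := hs a h1 h2
    simp only [hrepf_def, dif_pos h]
    exact h.choose_spec
  set E : Set (Multiset D) := {M | (∀ p ∈ M, p ∈ s) ∧ ∃ u : Dˣ, x = (u : D) * M.prod}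
    with hE_def
  have hprod_ne : ∀ M ∈ E, M.prod ≠ 0 :=
    fun M hM => Multiset.prod_ne_zero (fun h0 => (hsnz 0 (hM.1 0 h0)).1 rfl)
  have hchain : ∀ M ∈ E, ∀ M' ∈ E, M ≤ M' → M = M' := by
    intro M hM M' hM' hle
    by_contra hne
    have hadd : M + (M' - M) = M' := add_tsub_cancel_of_le hle
    obtain ⟨u, hu⟩ := hM.2
    obtain ⟨v, hv⟩ := hM'.2
    have hd : (M' - M) ≠ 0 := by
      intro h0
      exact hne (le_antisymm hle (by rw [← hadd, h0, add_zero]))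
    obtain ⟨a, ha⟩ := Multiset.exists_mem_of_ne_zero hd
    have haM' : a ∈ M' := Multiset.mem_of_le (tsub_le_self) ha
    have hanu : ¬ IsUnit a := (hsnz a (hM'.1 a haM')).2
    have hprod : M'.prod = M.prod * (M' - M).prod := by
      rw [← Multiset.prod_add, hadd]
    have key : M.prod * (u : D) = M.prod * ((v : D) * (M' - M).prod) := by
      have h1 : (u : D) * M.prod = (v : D) * (M.prod * (M' - M).prod) := by
        rw [← hu, hv, hprod]
      rw [mul_comm M.prod (u : D), h1]; ring
    have key2 : (u : D) = (v : D) * (M' - M).prod :=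
      mul_left_cancel₀ (hprod_ne M hM) key
    have hunit : IsUnit ((M' - M).prod) := by
      have : IsUnit ((v : D) * (M' - M).prod) := key2 ▸ u.isUnit
      exact (Units.isUnit_units_mul v _).mp this
    exact hanu (isUnit_of_dvd_unit (Multiset.dvd_prod ha) hunit)
  have hEfin : E.Finite := by
    set φ : Multiset D → ({p // p ∈ s} → ℕ) := fun M i => M.count (i : D) with hφ
    have hinj : Set.InjOn φ E := by
      intro M hM M' hM' hMM
      refine Multiset.ext.mpr (fun a => ?_)
      by_cases ha : a ∈ s
      · exact congrFun hMM ⟨a, ha⟩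
      · rw [Multiset.count_eq_zero_of_notMem (fun h => ha (hM.1 a h)),
          Multiset.count_eq_zero_of_notMem (fun h => ha (hM'.1 a h))]
    have hanti : IsAntichain (· ≤ ·) (φ '' E) := by
      rintro _ ⟨M, hM, rfl⟩ _ ⟨M', hM', rfl⟩ hne hle
      apply hne
      have hMle : M ≤ M' := by
        rw [Multiset.le_iff_count]
        intro a
        by_cases ha : a ∈ s
        · exact hle ⟨a, ha⟩
        · rw [Multiset.count_eq_zero_of_notMem (fun h => ha (hM.1 a h))]
          exact Nat.zero_le _
      rw [hchain M hM M' hM' hMle]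
    have hPWO : Set.IsPWO (φ '' E) :=
      Set.isPWO_of_wellQuasiOrderedLE (φ '' E)
    exact Set.Finite.of_finite_image
      (hanti.finite_of_partiallyWellOrderedOn hPWO) hinj
  set N := hEfin.toFinset.sup Multiset.card with hN_def
  have hN : ∀ M ∈ E, Multiset.card M ≤ N := fun M hM =>
    Finset.le_sup (hEfin.mem_toFinset.mpr hM)
  set fact : D → List D := fun b => if h : NzNonunit b then (hatomic b h).choose else [b]
    with hfact_def
  have hfact : ∀ b, NzNonunit b → TauAtomicFact τ (fact b) b := by
    intro b hb
    simp only [hfact_def, dif_pos hb]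
    exact (hatomic b hb).choose_spec
  set T : Finset D := ((N • s.val).powerset.toFinset).image Multiset.prod with hT_def
  refine ⟨(N • T.val).powerset.toFinset, ?_⟩
  intro l hl
  have hlnz : ∀ b ∈ l, NzNonunit b := hl.2.1
  set F := l.map fact with hF_def
  have hF2 : List.Forall₂ (fun b m => TauFact τ m b) l F := by
    rw [hF_def, List.forall₂_map_right_iff]
    exact List.forall₂_same.mpr (fun b hb => (hfact b (hlnz b hb)).1)
  set L := F.flatten with hL_def
  have hL : TauFact τ L x := href x l F hl hF2
  have hLmem : ∀ a ∈ L, ∃ b ∈ l, a ∈ fact b := by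
    intro a ha
    obtain ⟨m, hm, ham⟩ := List.mem_flatten.mp ha
    obtain ⟨b, hb, rfl⟩ := List.mem_map.mp hm
    exact ⟨b, hb, ham⟩
  have hLatom : ∀ a ∈ L, TauIrred τ a := by
    intro a ha
    obtain ⟨b, hb, ham⟩ := hLmem a ha
    exact (hfact b (hlnz b hb)).2 a ham
  have hLrep : ∀ a ∈ L, repf a ∈ s ∧ Associated a (repf a) := fun a ha =>
    hrep a (hLatom a ha) ⟨L, hL, ha⟩
  have hblock : ∀ b ∈ l, ∀ a ∈ fact b, a ∈ L := by
    intro b hb a ha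
    exact List.mem_flatten.mpr ⟨fact b, List.mem_map_of_mem (f := fact) hb, ha⟩
  have hMLE : ((L.map repf : List D) : Multiset D) ∈ E := by
    constructor
    · intro p hp
      obtain ⟨a, ha, rfl⟩ := List.mem_map.mp (Multiset.mem_coe.mp hp)
      exact (hLrep a ha).1
    · obtain ⟨u, hu⟩ := hL.2.2.2
      have h1 : Associated x L.prod := assoc_of_unit_mul u hu
      have h2 : Associated L.prod (L.map repf).prod := by
        refine assoc_prod_of_forall₂ ?_
        rw [List.forall₂_map_right_iff]
        exact List.forall₂_same.mpr (fun a ha => (hLrep a ha).2)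
      obtain ⟨w, hw⟩ := exists_unit_eq_of_assoc (h1.trans h2).symm
      exact ⟨w, by simpa using hw⟩
  have hLlen : L.length ≤ N := by
    have := hN _ hMLE
    simpa using this
  have hllen : l.length ≤ N := by
    refine le_trans ?_ hLlen
    have hne : ∀ m ∈ F, m ≠ [] := by
      intro m hm
      obtain ⟨b, hb, rfl⟩ := List.mem_map.mp hm
      exact (hfact b (hlnz b hb)).1.1
    have h1 := length_le_flatten_length F hne
    calc l.length = F.length := by rw [hF_def, List.length_map]
      _ ≤ L.length := h1
  set g : D → D := fun b => ((fact b).map repf).prod with hg_def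
  have hgT : ∀ b ∈ l, g b ∈ T := by
    intro b hb
    set m : Multiset D := (((fact b).map repf : List D) : Multiset D) with hm_def
    have hsupp : ∀ p ∈ m, p ∈ s := by
      intro p hp
      obtain ⟨a, ha, rfl⟩ := List.mem_map.mp (Multiset.mem_coe.mp hp)
      exact (hLrep a (hblock b hb a ha)).1
    have hcard : Multiset.card m ≤ N := by
      have h1 : (fact b).length ≤ L.length :=
        block_length_le_flatten_length (List.mem_map_of_mem (f := fact) hb)
      have h2 : Multiset.card m = (fact b).length := by simp [hm_def]
      rw [h2]
      exact le_trans h1 hLlen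
    have hle : m ≤ N • s.val := by
      rw [Multiset.le_iff_count]
      intro a
      by_cases ham : a ∈ m
      · rw [Multiset.count_nsmul]
        have hc1 : 1 ≤ s.val.count a := Multiset.count_pos.mpr (hsupp a ham)
        have hc2 : m.count a ≤ Multiset.card m := Multiset.count_le_card a m
        calc m.count a ≤ N := le_trans hc2 hcard
          _ = N * 1 := (mul_one N).symm
          _ ≤ N * s.val.count a := Nat.mul_le_mul_left N hc1
      · rw [Multiset.count_eq_zero_of_notMem ham]
        exact Nat.zero_le _
    refine Finset.mem_image.mpr ⟨m, Multiset.mem_toFinset.mpr (Multiset.mem_powerset.mpr hle), ?_⟩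
    simp [hm_def, hg_def]
  have hassoc : List.Forall₂ Associated l (l.map g) := by
    rw [List.forall₂_map_right_iff]
    refine List.forall₂_same.mpr (fun b hb => ?_)
    obtain ⟨u, hu⟩ := (hfact b (hlnz b hb)).1.2.2.2
    have h1 : Associated b (fact b).prod := assoc_of_unit_mul u hu
    have h2 : Associated (fact b).prod ((fact b).map repf).prod := by
      refine assoc_prod_of_forall₂ ?_
      rw [List.forall₂_map_right_iff]
      exact List.forall₂_same.mpr (fun a ha => (hLrep a (hblock b hb a ha)).2)
    exact h1.trans h2
  refine ⟨((l.map g : List D) : Multiset D), ?_, rel_coe_of_forall₂ hassoc⟩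
  refine Multiset.mem_toFinset.mpr (Multiset.mem_powerset.mpr ?_)
  rw [Multiset.le_iff_count]
  intro a
  by_cases ham : a ∈ ((l.map g : List D) : Multiset D)
  · have haT : a ∈ T := by
      obtain ⟨b, hb, rfl⟩ := List.mem_map.mp (Multiset.mem_coe.mp ham)
      exact hgT b hb
    rw [Multiset.count_nsmul]
    have hc1 : T.val.count a = 1 := Multiset.count_eq_one_of_mem T.nodup haT
    have hc2 : Multiset.count a ((l.map g : List D) : Multiset D) ≤ l.length := by
      have := Multiset.count_le_card a ((l.map g : List D) : Multiset D)
      simpa using this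
    rw [hc1, mul_one]
    exact le_trans hc2 hllen
  · rw [Multiset.count_eq_zero_of_notMem ham]
    exact Nat.zero_le _
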